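/- Let S = {a,b,c,d} ⊆ ℝ² be four points, none lying in the convex hull of the other three, with opposing Radon pairs {a,c} and {b,d}. Then for every λ > 0 and every r ∈ ℝ², at least one of the points b, d, λa + r, λc + r lies in the convex hull of {a, c, λb + r, λd + r}. -/

import Mathlib

lemma hull4_mem {E : Type*} [AddCommGroup E] [Module ℝ E] {A B C D z : E} {w1 w2 w3 w4 : ℝ}
    (h1 : 0 ≤ w1) (h2 : 0 ≤ w2) (h3 : 0 ≤ w3) (h4 : 0 ≤ w4)
    (hsum : w1 + w2 + w3 + w4 = 1)
    (hz : z = w1 • A + w2 • B + w3 • C + w4 • D) :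
    z ∈ convexHull ℝ ({A, B, C, D} : Set E) := by
  have hconv := convex_convexHull ℝ ({A, B, C, D} : Set E)
  have hmem : ∀ i ∈ (Finset.univ : Finset (Fin 4)),
      (![A, B, C, D] i) ∈ convexHull ℝ ({A, B, C, D} : Set E) := by
    intro i _
    apply subset_convexHull
    fin_cases i <;> simp
  have hw : ∀ i ∈ (Finset.univ : Finset (Fin 4)), (0:ℝ) ≤ ![w1, w2, w3, w4] i := by
    intro i _; fin_cases i <;> assumption
  have hs : ∑ i ∈ (Finset.univ : Finset (Fin 4)), ![w1, w2, w3, w4] i = 1 := by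
    simp [Fin.sum_univ_four]; linarith
  have := hconv.sum_mem hw hs hmem
  rw [Fin.sum_univ_four] at this
  simpa [← hz] using this

variable {E : Type*} [AddCommGroup E] [Module ℝ E]

/-- certificate that `d` (= `p + (1-t)•v`) is in the hull -/
lemma certD (p u v : E) (s t l α β φ : ℝ)
    (hφ0 : 0 ≤ φ) (hφ : φ * (β + (1-t)*l) = 1 - t)
    (h1 : φ * (s + α) ≤ s) (h2 : φ * (1 - s - α) ≤ 1 - s) :
    p + (1-t) • v ∈ convexHull ℝ ({p - s • u, p + (1-s) • u,
      p + α • u + (β - t*l) • v, p + α • u + (β + (1-t)*l) • v} : Set E) := by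
  apply hull4_mem (w1 := (1-φ)*(1-s) + φ*α) (w2 := (1-φ)*s - φ*α) (w3 := 0) (w4 := φ)
  · nlinarith [h2]
  · nlinarith [h1]
  · exact le_refl 0
  · exact hφ0
  · ring
  · match_scalars <;> first | ring1 | linear_combination -hφ | linear_combination hφ

/-- certificate that `b` (= `p - t•v`) is in the hull -/
lemma certB (p u v : E) (s t l α β φ : ℝ)
    (hφ0 : 0 ≤ φ) (hφ : φ * (t*l - β) = t)
    (h1 : φ * (s + α) ≤ s) (h2 : φ * (1 - s - α) ≤ 1 - s) :
    p - t • v ∈ convexHull ℝ ({p - s • u, p + (1-s) • u,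
      p + α • u + (β - t*l) • v, p + α • u + (β + (1-t)*l) • v} : Set E) := by
  apply hull4_mem (w1 := (1-φ)*(1-s) + φ*α) (w2 := (1-φ)*s - φ*α) (w3 := φ) (w4 := 0)
  · nlinarith [h2]
  · nlinarith [h1]
  · exact hφ0
  · exact le_refl 0
  · ring
  · match_scalars <;> first | ring1 | linear_combination -hφ | linear_combination hφ

/-- certificate that `l•a + r` (= `p + (α - s*l)•u + β•v`) is in the hull -/
lemma certA (p u v : E) (s t l α β θ wB wD : ℝ)
    (hθ0 : 0 ≤ θ) (hθ : θ * (s + α) = s * l)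
    (hB : 0 ≤ wB) (hD : 0 ≤ wD) (hsum : θ + wB + wD = 1)
    (hv : wB * (β - t*l) + wD * (β + (1-t)*l) = β) :
    p + (α - s*l) • u + β • v ∈ convexHull ℝ ({p - s • u, p + (1-s) • u,
      p + α • u + (β - t*l) • v, p + α • u + (β + (1-t)*l) • v} : Set E) := by
  apply hull4_mem (w1 := θ) (w2 := 0) (w3 := wB) (w4 := wD)
  · exact hθ0
  · exact le_refl 0
  · exact hB
  · exact hD
  · linarith
  · match_scalars
    · linear_combination -hsum
    · linear_combination hθ - α * hsum
    · linear_combination -hv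
/-- certificate that `l•c + r` is in the hull -/
lemma certC (p u v : E) (s t l α β θ wB wD : ℝ)
    (hθ0 : 0 ≤ θ) (hθ : θ * (1 - s - α) = (1-s) * l)
    (hB : 0 ≤ wB) (hD : 0 ≤ wD) (hsum : θ + wB + wD = 1)
    (hv : wB * (β - t*l) + wD * (β + (1-t)*l) = β) :
    p + (α + (1-s)*l) • u + β • v ∈ convexHull ℝ ({p - s • u, p + (1-s) • u,
      p + α • u + (β - t*l) • v, p + α • u + (β + (1-t)*l) • v} : Set E) := by
  apply hull4_mem (w1 := 0) (w2 := θ) (w3 := wB) (w4 := wD)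
  · exact le_refl 0
  · exact hθ0
  · exact hB
  · exact hD
  · linarith
  · match_scalars
    · linear_combination -hsum
    · linear_combination -hθ - α * hsum
    · linear_combination -hv

set_option maxHeartbeats 2000000 in
lemma key_lemma (p u v : E) (s t l α β : ℝ)
    (hs0 : 0 < s) (hs1 : s < 1) (ht0 : 0 < t) (ht1 : t < 1) (hl : 0 < l) :
    p - t • v ∈ convexHull ℝ ({p - s • u, p + (1-s) • u,
      p + α • u + (β - t*l) • v, p + α • u + (β + (1-t)*l) • v} : Set E) ∨
    p + (1-t) • v ∈ convexHull ℝ ({p - s • u, p + (1-s) • u,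
      p + α • u + (β - t*l) • v, p + α • u + (β + (1-t)*l) • v} : Set E) ∨
    p + (α - s*l) • u + β • v ∈ convexHull ℝ ({p - s • u, p + (1-s) • u,
      p + α • u + (β - t*l) • v, p + α • u + (β + (1-t)*l) • v} : Set E) ∨
    p + (α + (1-s)*l) • u + β • v ∈ convexHull ℝ ({p - s • u, p + (1-s) • u,
      p + α • u + (β - t*l) • v, p + α • u + (β + (1-t)*l) • v} : Set E) := by
  have ht1' : (0:ℝ) < 1 - t := by linarith
  have hs1' : (0:ℝ) < 1 - s := by linarith
  rcases le_or_gt 0 β with hβ | hβ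
  · have hD0 : 0 < β + (1-t)*l := by nlinarith
    rcases le_or_gt 0 α with hα | hα
    · by_cases hcon : (1-t)*(s+α) ≤ s*(β+(1-t)*l)
      · refine Or.inr (Or.inl ?_)
        have hD1 : 1 - t ≤ β + (1-t)*l := by
          nlinarith [mul_nonneg hα ht1'.le]
        refine certD p u v s t l α β ((1-t)/(β+(1-t)*l))
          (div_nonneg ht1'.le hD0.le) (by field_simp) ?_ ?_
        · rw [div_mul_eq_mul_div, div_le_iff₀ hD0]; linarith
        · rw [div_mul_eq_mul_div, div_le_iff₀ hD0]
          nlinarith [mul_le_mul_of_nonneg_left hD1 hs1'.le,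
            mul_nonneg ht1'.le hα]
      · refine Or.inr (Or.inr (Or.inl ?_))
        push_neg at hcon
        have hsα : (0:ℝ) < s + α := by linarith
        obtain ⟨θ, hθ0, hθ⟩ : ∃ θ : ℝ, 0 ≤ θ ∧ θ * (s + α) = s * l :=
          ⟨s*l/(s + α), by positivity, by field_simp⟩
        have hlt : s * l < s + α := by
          nlinarith [mul_nonneg hs0.le hβ]
        have hθ1 : θ ≤ 1 := by nlinarith
        have hBnum : 0 ≤ (1 - θ)*(1-t)*l - θ*β := by
          have h' : (s + α) * ((1 - θ)*(1-t)*l - θ*β)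
              = l*((1-t)*(s + α) - s*(β+(1-t)*l)) := by
            linear_combination (-((1-t)*l + β)) * hθ
          nlinarith [mul_pos hl (show 0 < (1-t)*(s + α) - s*(β+(1-t)*l) by linarith)]
        have hDnum : 0 ≤ θ*β + (1-θ)*t*l := by
          nlinarith [mul_nonneg hθ0 hβ,
            mul_nonneg (by linarith : (0:ℝ) ≤ 1-θ) (mul_nonneg ht0.le hl.le)]
        refine certA p u v s t l α β θ (((1 - θ)*(1-t)*l - θ*β)/l)
          ((θ*β + (1-θ)*t*l)/l) hθ0 hθ (div_nonneg hBnum hl.le)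
          (div_nonneg hDnum hl.le) ?_ ?_
        · field_simp
          ring
        · field_simp
          ring
    · by_cases hcon : (1-t)*(1-s-α) ≤ (1-s)*(β+(1-t)*l)
      · refine Or.inr (Or.inl ?_)
        have hD1 : 1 - t ≤ β + (1-t)*l := by
          nlinarith [mul_nonneg (by linarith : (0:ℝ) ≤ -α) ht1'.le]
        refine certD p u v s t l α β ((1-t)/(β+(1-t)*l))
          (div_nonneg ht1'.le hD0.le) (by field_simp) ?_ ?_
        · rw [div_mul_eq_mul_div, div_le_iff₀ hD0]
          nlinarith [mul_le_mul_of_nonneg_left hD1 hs0.le,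
            mul_nonneg ht1'.le (by linarith : (0:ℝ) ≤ -α)]
        · rw [div_mul_eq_mul_div, div_le_iff₀ hD0]; linarith
      · refine Or.inr (Or.inr (Or.inr ?_))
        push_neg at hcon
        have hsα : (0:ℝ) < 1 - s - α := by linarith
        obtain ⟨θ, hθ0, hθ⟩ : ∃ θ : ℝ, 0 ≤ θ ∧ θ * (1 - s - α) = (1-s) * l :=
          ⟨(1-s)*l/(1 - s - α), by positivity, by field_simp⟩
        have hlt : (1-s) * l < 1 - s - α := by
          nlinarith [mul_nonneg hs1'.le hβ]
        have hθ1 : θ ≤ 1 := by nlinarith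
        have hBnum : 0 ≤ (1 - θ)*(1-t)*l - θ*β := by
          have h' : (1 - s - α) * ((1 - θ)*(1-t)*l - θ*β)
              = l*((1-t)*(1 - s - α) - (1-s)*(β+(1-t)*l)) := by
            linear_combination (-((1-t)*l + β)) * hθ
          nlinarith [mul_pos hl (show 0 < (1-t)*(1 - s - α) - (1-s)*(β+(1-t)*l) by linarith)]
        have hDnum : 0 ≤ θ*β + (1-θ)*t*l := by
          nlinarith [mul_nonneg hθ0 hβ,
            mul_nonneg (by linarith : (0:ℝ) ≤ 1-θ) (mul_nonneg ht0.le hl.le)]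
        refine certC p u v s t l α β θ (((1 - θ)*(1-t)*l - θ*β)/l)
          ((θ*β + (1-θ)*t*l)/l) hθ0 hθ (div_nonneg hBnum hl.le)
          (div_nonneg hDnum hl.le) ?_ ?_
        · field_simp
          ring
        · field_simp
          ring
  · have hD0 : 0 < t*l - β := by nlinarith
    rcases le_or_gt 0 α with hα | hα
    · by_cases hcon : t*(s+α) ≤ s*(t*l-β)
      · refine Or.inl ?_
        have hD1 : t ≤ t*l - β := by
          nlinarith [mul_nonneg hα ht0.le]
        refine certB p u v s t l α β (t/(t*l-β))
          (div_nonneg ht0.le hD0.le) (by field_simp) ?_ ?_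
        · rw [div_mul_eq_mul_div, div_le_iff₀ hD0]; linarith
        · rw [div_mul_eq_mul_div, div_le_iff₀ hD0]
          nlinarith [mul_le_mul_of_nonneg_left hD1 hs1'.le,
            mul_nonneg ht0.le hα]
      · refine Or.inr (Or.inr (Or.inl ?_))
        push_neg at hcon
        have hsα : (0:ℝ) < s + α := by linarith
        obtain ⟨θ, hθ0, hθ⟩ : ∃ θ : ℝ, 0 ≤ θ ∧ θ * (s + α) = s * l :=
          ⟨s*l/(s + α), by positivity, by field_simp⟩
        have hlt : s * l < s + α := by
          nlinarith [mul_nonneg hs0.le (by linarith : (0:ℝ) ≤ -β)]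
        have hθ1 : θ ≤ 1 := by nlinarith
        have hDnum : 0 ≤ θ*β + (1-θ)*t*l := by
          have h' : (s + α) * (θ*β + (1-θ)*t*l)
              = l*(t*(s + α) - s*(t*l-β)) := by
            linear_combination (β - t*l) * hθ
          nlinarith [mul_pos hl (show 0 < t*(s + α) - s*(t*l-β) by linarith)]
        have hBnum : 0 ≤ (1 - θ)*(1-t)*l - θ*β := by
          nlinarith [mul_nonneg hθ0 (by linarith : (0:ℝ) ≤ -β),
            mul_nonneg (by linarith : (0:ℝ) ≤ 1-θ) (mul_nonneg ht1'.le hl.le)]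
        refine certA p u v s t l α β θ (((1 - θ)*(1-t)*l - θ*β)/l)
          ((θ*β + (1-θ)*t*l)/l) hθ0 hθ (div_nonneg hBnum hl.le)
          (div_nonneg hDnum hl.le) ?_ ?_
        · field_simp
          ring
        · field_simp
          ring
    · by_cases hcon : t*(1-s-α) ≤ (1-s)*(t*l-β)
      · refine Or.inl ?_
        have hD1 : t ≤ t*l - β := by
          nlinarith [mul_nonneg (by linarith : (0:ℝ) ≤ -α) ht0.le]
        refine certB p u v s t l α β (t/(t*l-β))
          (div_nonneg ht0.le hD0.le) (by field_simp) ?_ ?_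
        · rw [div_mul_eq_mul_div, div_le_iff₀ hD0]
          nlinarith [mul_le_mul_of_nonneg_left hD1 hs0.le,
            mul_nonneg ht0.le (by linarith : (0:ℝ) ≤ -α)]
        · rw [div_mul_eq_mul_div, div_le_iff₀ hD0]; linarith
      · refine Or.inr (Or.inr (Or.inr ?_))
        push_neg at hcon
        have hsα : (0:ℝ) < 1 - s - α := by linarith
        obtain ⟨θ, hθ0, hθ⟩ : ∃ θ : ℝ, 0 ≤ θ ∧ θ * (1 - s - α) = (1-s) * l :=
          ⟨(1-s)*l/(1 - s - α), by positivity, by field_simp⟩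
        have hlt : (1-s) * l < 1 - s - α := by
          nlinarith [mul_nonneg hs1'.le (by linarith : (0:ℝ) ≤ -β)]
        have hθ1 : θ ≤ 1 := by nlinarith
        have hDnum : 0 ≤ θ*β + (1-θ)*t*l := by
          have h' : (1 - s - α) * (θ*β + (1-θ)*t*l)
              = l*(t*(1 - s - α) - (1-s)*(t*l-β)) := by
            linear_combination (β - t*l) * hθ
          nlinarith [mul_pos hl (show 0 < t*(1 - s - α) - (1-s)*(t*l-β) by linarith)]
        have hBnum : 0 ≤ (1 - θ)*(1-t)*l - θ*β := by
          nlinarith [mul_nonneg hθ0 (by linarith : (0:ℝ) ≤ -β),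
            mul_nonneg (by linarith : (0:ℝ) ≤ 1-θ) (mul_nonneg ht1'.le hl.le)]
        refine certC p u v s t l α β θ (((1 - θ)*(1-t)*l - θ*β)/l)
          ((θ*β + (1-θ)*t*l)/l) hθ0 hθ (div_nonneg hBnum hl.le)
          (div_nonneg hDnum hl.le) ?_ ?_
        · field_simp
          ring
        · field_simp
          ring

/-- Let `a, b, c, d ∈ ℝ²` be four (distinct) points, none in the convex hull of the other
three, whose opposing Radon pairs are `{a,c}` and `{b,d}` (the segments `[a,c]` and `[b,d]`
meet).  Then for every `λ > 0` and `r ∈ ℝ²`, one of `b`, `d`, `λ•a + r`, `λ•c + r` lies in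
the convex hull of `{a, c, λ•b + r, λ•d + r}`. -/
theorem inseparable_lemma (a b c d : ℝ × ℝ)
    (hab : a ≠ b) (hac : a ≠ c) (had : a ≠ d) (hbc : b ≠ c) (hbd : b ≠ d) (hcd : c ≠ d)
    (ha : a ∉ convexHull ℝ ({b, c, d} : Set (ℝ × ℝ)))
    (hb : b ∉ convexHull ℝ ({a, c, d} : Set (ℝ × ℝ)))
    (hc : c ∉ convexHull ℝ ({a, b, d} : Set (ℝ × ℝ)))
    (hd : d ∉ convexHull ℝ ({a, b, c} : Set (ℝ × ℝ)))
    (hradon : (segment ℝ a c ∩ segment ℝ b d).Nonempty)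
    (l : ℝ) (hl : 0 < l) (r : ℝ × ℝ) :
    b ∈ convexHull ℝ ({a, c, l • b + r, l • d + r} : Set (ℝ × ℝ)) ∨
    d ∈ convexHull ℝ ({a, c, l • b + r, l • d + r} : Set (ℝ × ℝ)) ∨
    l • a + r ∈ convexHull ℝ ({a, c, l • b + r, l • d + r} : Set (ℝ × ℝ)) ∨
    l • c + r ∈ convexHull ℝ ({a, c, l • b + r, l • d + r} : Set (ℝ × ℝ)) := by
  obtain ⟨p, hpac, hpbd⟩ := hradon
  obtain ⟨s1, s2, hs1n, hs2n, hs12, hps⟩ := hpac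
  obtain ⟨t1, t2, ht1n, ht2n, ht12, hpt⟩ := hpbd
  have hs1e : s1 = 1 - s2 := by linarith
  have ht1e : t1 = 1 - t2 := by linarith
  subst hs1e ht1e
  -- strictness
  have hs2pos : 0 < s2 := by
    rcases hs2n.lt_or_eq with h | h; · exact h
    exfalso
    have hpa : p = a := by rw [← hps, ← h]; simp
    exact ha (segment_subset_convexHull (show b ∈ ({b,c,d}:Set (ℝ×ℝ)) by simp)
      (show d ∈ ({b,c,d}:Set (ℝ×ℝ)) by simp)
      (hpa ▸ (⟨1-t2, t2, ht1n, ht2n, by ring, hpt⟩ : p ∈ segment ℝ b d)))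
  have hs2lt : s2 < 1 := by
    rcases lt_or_eq_of_le (by linarith : s2 ≤ 1) with h | h; · exact h
    exfalso
    have hpc : p = c := by rw [← hps, h]; simp
    exact hc (segment_subset_convexHull (show b ∈ ({a,b,d}:Set (ℝ×ℝ)) by simp)
      (show d ∈ ({a,b,d}:Set (ℝ×ℝ)) by simp)
      (hpc ▸ (⟨1-t2, t2, ht1n, ht2n, by ring, hpt⟩ : p ∈ segment ℝ b d)))
  have ht2pos : 0 < t2 := by
    rcases ht2n.lt_or_eq with h | h; · exact h
    exfalso
    have hpb : p = b := by rw [← hpt, ← h]; simp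
    exact hb (segment_subset_convexHull (show a ∈ ({a,c,d}:Set (ℝ×ℝ)) by simp)
      (show c ∈ ({a,c,d}:Set (ℝ×ℝ)) by simp)
      (hpb ▸ (⟨1-s2, s2, hs1n, hs2n, by ring, hps⟩ : p ∈ segment ℝ a c)))
  have ht2lt : t2 < 1 := by
    rcases lt_or_eq_of_le (by linarith : t2 ≤ 1) with h | h; · exact h
    exfalso
    have hpd : p = d := by rw [← hpt, h]; simp
    exact hd (segment_subset_convexHull (show a ∈ ({a,b,c}:Set (ℝ×ℝ)) by simp)
      (show c ∈ ({a,b,c}:Set (ℝ×ℝ)) by simp)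
      (hpd ▸ (⟨1-s2, s2, hs1n, hs2n, by ring, hps⟩ : p ∈ segment ℝ a c)))
  -- basic point expressions
  have e_a : a = p - s2 • (c - a) := by
    linear_combination (norm := module) hps
  have e_c : c = p + (1-s2) • (c - a) := by
    linear_combination (norm := module) hps
  have e_b : b = p - t2 • (d - b) := by
    linear_combination (norm := module) hpt
  have e_d : d = p + (1-t2) • (d - b) := by
    linear_combination (norm := module) hpt
  -- the four points are not collinear: cross product of (c-a), (d-b) is nonzero
  have hcross : (c - a).1 * (d - b).2 - (c - a).2 * (d - b).1 ≠ 0 := by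
    intro h0
    -- (d - b) is a multiple of (c - a)
    have hu0 : c - a ≠ 0 := sub_ne_zero.mpr (Ne.symm hac)
    have h0' : (c.1 - a.1) * (d.2 - b.2) - (c.2 - a.2) * (d.1 - b.1) = 0 := by
      simpa using h0
    obtain ⟨k, hk⟩ : ∃ k : ℝ, d - b = k • (c - a) := by
      by_cases h1 : (c - a).1 = 0
      · have h2 : (c - a).2 ≠ 0 := by
          intro h2; exact hu0 (Prod.ext h1 h2)
        refine ⟨(d - b).2 / (c - a).2, Prod.ext ?_ ?_⟩
        · have : (c - a).2 * (d - b).1 = 0 := by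
            rw [h1] at h0; linarith [h0]
          have hdb1 : (d - b).1 = 0 := by
            rcases mul_eq_zero.mp this with h | h
            · exact absurd h h2
            · exact h
          simp [hdb1, h1, Prod.smul_fst]
        · have h2' : c.2 - a.2 ≠ 0 := by simpa using h2
          simp only [Prod.smul_snd, smul_eq_mul]
          show d.2 - b.2 = (d - b).2 / (c - a).2 * (c.2 - a.2)
          simp only [Prod.snd_sub]
          field_simp
      · have h1' : c.1 - a.1 ≠ 0 := by simpa using h1
        refine ⟨(d - b).1 / (c - a).1, Prod.ext ?_ ?_⟩
        · simp only [Prod.smul_fst, smul_eq_mul, Prod.fst_sub]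
          field_simp
        · simp only [Prod.smul_snd, smul_eq_mul, Prod.fst_sub, Prod.snd_sub]
          field_simp
          linear_combination h0'
    -- so a, b, c, d lie on a line through p directed by (c - a)
    have e_b2 : b = p + (-(t2*k)) • (c - a) := by
      linear_combination (norm := module) hpt - t2 • hk
    have e_d2 : d = p + ((1-t2)*k) • (c - a) := by
      linear_combination (norm := module) hpt + (1-t2) • hk
    rcases le_or_gt (-(t2*k)) (-s2) with hx1 | hx1
    rcases lt_or_eq_of_le hx1 with hx1' | hx1'
    · -- t2*k > s2 : a lies between b and d
      have hkpos : 0 < k := by nlinarith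
      have hμk : (((1-t2)*k + s2)/k) * k = (1-t2)*k + s2 := by field_simp
      refine ha (segment_subset_convexHull (show b ∈ ({b,c,d}:Set (ℝ×ℝ)) by simp)
        (show d ∈ ({b,c,d}:Set (ℝ×ℝ)) by simp)
        (⟨((1-t2)*k + s2)/k, 1 - ((1-t2)*k + s2)/k, ?_, ?_, by ring, ?_⟩ :
          a ∈ segment ℝ b d))
      · positivity
      · rw [sub_nonneg, div_le_one hkpos]; nlinarith
      · linear_combination (norm := module) (((1-t2)*k + s2)/k) • e_b2
          + (1 - ((1-t2)*k + s2)/k) • e_d2 - e_a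
          - congrArg (fun x : ℝ => x • (c - a)) hμk
    · -- t2*k = s2 : b, a and the segment endpoint coincide... a ∈ segment b d?
      -- here -(t2*k) = -s2 so b's coordinate equals a's, meaning a = b
      have : b = a := by
        linear_combination (norm := module) e_b2 - e_a
          + congrArg (fun x : ℝ => x • (c - a)) hx1'
      exact hab this.symm
    rcases le_or_gt (-(t2*k)) (1-s2) with hx2 | hx2
    · -- b lies between a and c
      refine hb (segment_subset_convexHull (show a ∈ ({a,c,d}:Set (ℝ×ℝ)) by simp)
        (show c ∈ ({a,c,d}:Set (ℝ×ℝ)) by simp)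
        (⟨(1-s2) + t2*k, 1 - ((1-s2) + t2*k), by linarith, by linarith, by ring, ?_⟩ :
          b ∈ segment ℝ a c))
      linear_combination (norm := module) ((1-s2) + t2*k) • e_a
        + (1 - ((1-s2) + t2*k)) • e_c - e_b2
    · -- t2*k < -(1-s2) : c lies between b and d
      have hkneg : k < 0 := by nlinarith
      have hkne : k ≠ 0 := ne_of_lt hkneg
      have hμk : (((1-t2)*k - (1-s2))/k) * k = (1-t2)*k - (1-s2) := by field_simp
      refine hc (segment_subset_convexHull (show b ∈ ({a,b,d}:Set (ℝ×ℝ)) by simp)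
        (show d ∈ ({a,b,d}:Set (ℝ×ℝ)) by simp)
        (⟨((1-t2)*k - (1-s2))/k, 1 - ((1-t2)*k - (1-s2))/k, ?_, ?_, by ring, ?_⟩ :
          c ∈ segment ℝ b d))
      · rw [le_div_iff_of_neg hkneg]
        nlinarith
      · rw [sub_nonneg, div_le_one_of_neg hkneg]; nlinarith
      · linear_combination (norm := module) (((1-t2)*k - (1-s2))/k) • e_b2
          + (1 - ((1-t2)*k - (1-s2))/k) • e_d2 - e_c
          - congrArg (fun x : ℝ => x • (c - a)) hμk
  -- decompose the translation-dilation displacement in the basis (c-a), (d-b)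
  obtain ⟨α, β, hw⟩ : ∃ α β : ℝ, l • p + r - p = α • (c - a) + β • (d - b) := by
    have hX : (c.1 - a.1) * (d.2 - b.2) - (c.2 - a.2) * (d.1 - b.1) ≠ 0 := by
      simpa using hcross
    refine ⟨((l*p.1 + r.1 - p.1) * (d.2 - b.2) - (l*p.2 + r.2 - p.2) * (d.1 - b.1)) /
        ((c.1 - a.1) * (d.2 - b.2) - (c.2 - a.2) * (d.1 - b.1)),
      ((c.1 - a.1) * (l*p.2 + r.2 - p.2) - (c.2 - a.2) * (l*p.1 + r.1 - p.1)) /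
        ((c.1 - a.1) * (d.2 - b.2) - (c.2 - a.2) * (d.1 - b.1)), Prod.ext ?_ ?_⟩
    · simp only [Prod.fst_add, Prod.fst_sub, Prod.smul_fst, smul_eq_mul]
      rw [div_mul_eq_mul_div, div_mul_eq_mul_div, ← add_div, eq_div_iff hX]
      ring
    · simp only [Prod.snd_add, Prod.snd_sub, Prod.smul_snd, smul_eq_mul]
      rw [div_mul_eq_mul_div, div_mul_eq_mul_div, ← add_div, eq_div_iff hX]
      ring
  -- images of the four points under x ↦ l•x + r
  have e_Tb : l • b + r = p + α • (c - a) + (β - t2*l) • (d - b) := by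
    linear_combination (norm := module) hw + l • hpt
  have e_Td : l • d + r = p + α • (c - a) + (β + (1-t2)*l) • (d - b) := by
    linear_combination (norm := module) hw + l • hpt
  have e_Ta : l • a + r = p + (α - s2*l) • (c - a) + β • (d - b) := by
    linear_combination (norm := module) hw + l • hps
  have e_Tc : l • c + r = p + (α + (1-s2)*l) • (c - a) + β • (d - b) := by
    linear_combination (norm := module) hw + l • hps
  have H := key_lemma p (c - a) (d - b) s2 t2 l α β hs2pos hs2lt ht2pos ht2lt hl
  rw [← e_a, ← e_c, ← e_b, ← e_d, ← e_Tb, ← e_Td, ← e_Ta, ← e_Tc] at H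
  exact H
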